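/- For every graph (possibly a multigraph) G=(V,E) with n vertices and m edges, and every real 0 < φ ≤ 1, there exists a partition {X₁,…,X_k} of V such that (1) Σᵢ |δ(Xᵢ)| = O(φ·m·log n), and (2) for every i and every nonempty S ⊊ Xᵢ, |E(S, Xᵢ∖S)| ≥ φ·min{vol(S), vol(Xᵢ∖S)}. -/

import Mathlib

set_option maxHeartbeats 1000000

open Finset

section ExpDecomp
variable {n : ℕ} (w : Fin n → Fin n → ℕ)

noncomputable def edVol (S : Finset (Fin n)) : ℝ := ∑ v ∈ S, ∑ u : Fin n, (w v u : ℝ)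
noncomputable def edCut (S T : Finset (Fin n)) : ℝ := ∑ u ∈ S, ∑ v ∈ T, (w u v : ℝ)

lemma edVol_nonneg (S : Finset (Fin n)) : 0 ≤ edVol w S := by
  apply Finset.sum_nonneg; intro v _; apply Finset.sum_nonneg; intro u _; positivity

lemma edCut_nonneg (S T : Finset (Fin n)) : 0 ≤ edCut w S T := by
  apply Finset.sum_nonneg; intro v _; apply Finset.sum_nonneg; intro u _; positivity

lemma edCut_symm (hw : ∀ u v, w u v = w v u) (S T : Finset (Fin n)) :
    edCut w S T = edCut w T S := by
  rw [edCut, edCut, Finset.sum_comm]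
  simp only [hw]

lemma edCut_union_right (S A B : Finset (Fin n)) (h : Disjoint A B) :
    edCut w S (A ∪ B) = edCut w S A + edCut w S B := by
  simp [edCut, Finset.sum_union h, Finset.sum_add_distrib]

lemma edCut_family (P : Finset (Finset (Fin n)))
    (hdisj : (P : Set (Finset (Fin n))).PairwiseDisjoint id) (T : Finset (Fin n)) :
    ∑ Y ∈ P, edCut w Y T = edCut w (P.sup id) T := by
  rw [Finset.sup_eq_biUnion, edCut, Finset.sum_biUnion hdisj]
  rfl

lemma edVol_union (A B : Finset (Fin n)) (h : Disjoint A B) :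
    edVol w (A ∪ B) = edVol w A + edVol w B := Finset.sum_union h

end ExpDecomp

theorem graph_expander_decomposition_exists :
    ∃ c : ℝ, 0 < c ∧
      ∀ (n : ℕ) (w : Fin n → Fin n → ℕ), (∀ u v, w u v = w v u) →
        ∀ m : ℕ, 2 * m = ∑ u : Fin n, ∑ v : Fin n, w u v →
          ∀ φ : ℝ, 0 < φ → φ ≤ 1 →
            ∃ P : Finpartition (Finset.univ : Finset (Fin n)),
              ((∑ X ∈ P.parts, ∑ u ∈ X, ∑ v ∈ Xᶜ, w u v : ℕ) : ℝ) ≤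
                  c * φ * m * Real.log n ∧
                ∀ X ∈ P.parts, ∀ S ⊆ X, S.Nonempty → (X \ S).Nonempty →
                  φ * min (∑ v ∈ S, ∑ u : Fin n, (w v u : ℝ))
                      (∑ v ∈ X \ S, ∑ u : Fin n, (w v u : ℝ)) ≤
                    ∑ u ∈ S, ∑ v ∈ X \ S, (w u v : ℝ) := by
  refine ⟨4 / Real.log 2, by positivity, ?_⟩
  intro n w hw m hm φ hφ hφ1
  -- key induction
  have key : ∀ N (X : Finset (Fin n)), X.card ≤ N →
      ∃ P : Finset (Finset (Fin n)),
        (∀ Y ∈ P, Y.Nonempty) ∧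
        (P : Set (Finset (Fin n))).PairwiseDisjoint id ∧
        P.sup id = X ∧
        (∀ Y ∈ P, ∀ S ⊆ Y, S.Nonempty → (Y \ S).Nonempty →
          φ * min (edVol w S) (edVol w (Y \ S)) ≤ edCut w S (Y \ S)) ∧
        ∑ Y ∈ P, edCut w Y (X \ Y) ≤
          (2 * φ / Real.log 2) * edVol w X * Real.log X.card := by
    intro N
    induction N with
    | zero =>
      intro X hX
      have : X = ∅ := Finset.card_eq_zero.mp (Nat.le_zero.mp hX)
      subst this
      exact ⟨∅, by simp, by simp, by simp, by simp, by simp⟩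
    | succ N ih =>
      intro X hX
      by_cases hexp : ∀ S ⊆ X, S.Nonempty → (X \ S).Nonempty →
          φ * min (edVol w S) (edVol w (X \ S)) ≤ edCut w S (X \ S)
      · rcases X.eq_empty_or_nonempty with rfl | hXne
        · exact ⟨∅, by simp, by simp, by simp, by simp, by simp⟩
        · refine ⟨{X}, by simpa using hXne, by simp, by simp, by simpa using hexp, ?_⟩
          have h1 : edCut w X (X \ X) = 0 := by simp [edCut]
          rw [Finset.sum_singleton, h1]
          have : (0:ℝ) ≤ Real.log X.card := by
            apply Real.log_nonneg
            have := hXne.card_pos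
            exact_mod_cast this
          have h2 : (0:ℝ) ≤ 2 * φ / Real.log 2 := by positivity
          exact mul_nonneg (mul_nonneg h2 (edVol_nonneg w X)) this
      · push_neg at hexp
        obtain ⟨S, hSX, hSne, hXSne, hsparse⟩ := hexp
        set S' := X \ S with hS'
        have hdisjSS' : Disjoint S S' := Finset.disjoint_sdiff
        have hunion : S ∪ S' = X := Finset.union_sdiff_of_subset hSX
        have hcards : S'.card + S.card = X.card := Finset.card_sdiff_add_card_eq_card hSX
        have hSlt : S.card < X.card := by
          have : S'.card ≠ 0 := Finset.card_ne_zero.mpr hXSne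
          omega
        have hS'lt : S'.card < X.card := by
          have : S.card ≠ 0 := Finset.card_ne_zero.mpr hSne
          omega
        obtain ⟨P₁, hP₁ne, hP₁disj, hP₁sup, hP₁exp, hP₁cut⟩ := ih S (by omega)
        obtain ⟨P₂, hP₂ne, hP₂disj, hP₂sup, hP₂exp, hP₂cut⟩ := ih S' (by omega)
        have hsubS : ∀ Y ∈ P₁, Y ⊆ S := fun Y hY => hP₁sup ▸ Finset.le_sup (f := id) hY
        have hsubS' : ∀ Y ∈ P₂, Y ⊆ S' := fun Y hY => hP₂sup ▸ Finset.le_sup (f := id) hY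
        have hPdisjoint : Disjoint P₁ P₂ := by
          rw [Finset.disjoint_left]
          intro Y h1 h2
          obtain ⟨v, hv⟩ := hP₁ne Y h1
          exact (Finset.mem_sdiff.mp (hsubS' Y h2 hv)).2 (hsubS Y h1 hv)
        refine ⟨P₁ ∪ P₂, ?_, ?_, ?_, ?_, ?_⟩
        · intro Y hY; rcases Finset.mem_union.mp hY with h | h
          exacts [hP₁ne Y h, hP₂ne Y h]
        · intro a ha b hb hab
          simp only [Finset.coe_union, Set.mem_union, Finset.mem_coe] at ha hb
          rcases ha with ha | ha <;> rcases hb with hb | hb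
          · exact hP₁disj ha hb hab
          · exact Finset.disjoint_of_subset_left (hsubS a ha)
              (Finset.disjoint_of_subset_right (hsubS' b hb) Finset.disjoint_sdiff)
          · exact Finset.disjoint_of_subset_left (hsubS' a ha)
              (Finset.disjoint_of_subset_right (hsubS b hb) Finset.disjoint_sdiff.symm)
          · exact hP₂disj ha hb hab
        · rw [Finset.sup_union, hP₁sup, hP₂sup]; exact hunion
        · intro Y hY; rcases Finset.mem_union.mp hY with h | h
          exacts [hP₁exp Y h, hP₂exp Y h]
        · -- the cut bound
          rw [Finset.sum_union hPdisjoint]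
          have hsplit1 : ∀ Y ∈ P₁, edCut w Y (X \ Y) = edCut w Y (S \ Y) + edCut w Y S' := by
            intro Y hY
            have hYS := hsubS Y hY
            have hXY : X \ Y = (S \ Y) ∪ S' := by
              rw [hS']
              ext x
              simp only [Finset.mem_sdiff, Finset.mem_union]
              constructor
              · rintro ⟨hx, hnx⟩
                by_cases hxS : x ∈ S
                · exact Or.inl ⟨hxS, hnx⟩
                · exact Or.inr ⟨hx, hxS⟩
              · rintro (⟨hx, hnx⟩ | ⟨hx, hnx⟩)
                · exact ⟨hSX hx, hnx⟩
                · exact ⟨hx, fun hc => hnx (hYS hc)⟩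
            have hd : Disjoint (S \ Y) S' := 
              Finset.disjoint_of_subset_left (Finset.sdiff_subset) Finset.disjoint_sdiff
            rw [hXY, edCut_union_right w _ _ _ hd]
          have hsplit2 : ∀ Y ∈ P₂, edCut w Y (X \ Y) = edCut w Y (S' \ Y) + edCut w Y S := by
            intro Y hY
            have hYS := hsubS' Y hY
            have hXY : X \ Y = (S' \ Y) ∪ S := by
              rw [hS']
              ext x
              simp only [Finset.mem_sdiff, Finset.mem_union]
              constructor
              · rintro ⟨hx, hnx⟩
                by_cases hxS : x ∈ S
                · exact Or.inr hxS
                · exact Or.inl ⟨⟨hx, hxS⟩, hnx⟩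
              · rintro (⟨⟨hx, _⟩, hnx⟩ | hx)
                · exact ⟨hx, hnx⟩
                · exact ⟨hSX hx, fun hc => (Finset.mem_sdiff.mp (hYS hc)).2 hx⟩
            have hd : Disjoint (S' \ Y) S := 
              Finset.disjoint_of_subset_left (Finset.sdiff_subset) Finset.disjoint_sdiff.symm
            rw [hXY, edCut_union_right w _ _ _ hd]
          rw [Finset.sum_congr rfl hsplit1, Finset.sum_congr rfl hsplit2,
            Finset.sum_add_distrib, Finset.sum_add_distrib,
            edCut_family w P₁ hP₁disj, edCut_family w P₂ hP₂disj, hP₁sup, hP₂sup]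
          have hc21 : edCut w S' S = edCut w S S' := edCut_symm w hw S' S
          rw [hc21]
          -- now: B₁ + cut S S' + (B₂ + cut S S') ≤ K * vol X * log |X|
          have hcutmin : edCut w S S' ≤ φ * min (edVol w S) (edVol w S') := le_of_lt hsparse
          have hvolX : edVol w X = edVol w S + edVol w S' := by
            rw [← hunion, edVol_union w _ _ hdisjSS']
          have hlog2 : (0:ℝ) < Real.log 2 := Real.log_pos (by norm_num)
          set K := 2 * φ / Real.log 2 with hK
          have hKpos : 0 < K := by positivity
          have hvS := edVol_nonneg w S
          have hvS' := edVol_nonneg w S'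
          have hcard1 : 1 ≤ S.card := hSne.card_pos
          have hcard1' : 1 ≤ S'.card := hXSne.card_pos
          -- main arithmetic
          have harith : K * edVol w S * Real.log S.card + K * edVol w S' * Real.log S'.card
              + 2 * (φ * min (edVol w S) (edVol w S'))
              ≤ K * edVol w X * Real.log X.card := by
            have h2φ : 2 * φ = K * Real.log 2 := by
              rw [hK]; exact (div_mul_cancel₀ _ (ne_of_gt hlog2)).symm
            rcases le_total S.card S'.card with hc | hc
            · -- |S| smaller: 2|S| ≤ |X|
              have h2S : 2 * S.card ≤ X.card := by omega
              have hminv : min (edVol w S) (edVol w S') ≤ edVol w S := min_le_left _ _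
              have hlogS : Real.log S.card + Real.log 2 ≤ Real.log X.card := by
                rw [← Real.log_mul (Nat.cast_ne_zero.mpr (by omega : S.card ≠ 0)) (by norm_num)]
                apply Real.log_le_log (mul_pos (Nat.cast_pos.mpr (by omega : 0 < S.card)) (by norm_num : (0:ℝ) < 2))
                exact_mod_cast (show S.card * 2 ≤ X.card by omega)
              have hlogS' : Real.log S'.card ≤ Real.log X.card := by
                apply Real.log_le_log (Nat.cast_pos.mpr (by omega : 0 < S'.card))
                exact_mod_cast Nat.le_of_lt hS'lt
              calc K * edVol w S * Real.log S.card + K * edVol w S' * Real.log S'.card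
                  + 2 * (φ * min (edVol w S) (edVol w S'))
                  ≤ K * edVol w S * Real.log S.card + K * edVol w S' * Real.log S'.card
                    + K * Real.log 2 * edVol w S := by
                    nlinarith [mul_le_mul_of_nonneg_left hminv (le_of_lt hφ)]
                _ = K * edVol w S * (Real.log S.card + Real.log 2)
                    + K * edVol w S' * Real.log S'.card := by ring
                _ ≤ K * edVol w S * Real.log X.card + K * edVol w S' * Real.log X.card := by
                    have h1 : 0 ≤ K * edVol w S := by positivity
                    have h2 : 0 ≤ K * edVol w S' := by positivity
                    have := mul_le_mul_of_nonneg_left hlogS h1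
                    have := mul_le_mul_of_nonneg_left hlogS' h2
                    nlinarith
                _ = K * edVol w X * Real.log X.card := by rw [hvolX]; ring
            · -- |S'| smaller
              have h2S : 2 * S'.card ≤ X.card := by omega
              have hminv : min (edVol w S) (edVol w S') ≤ edVol w S' := min_le_right _ _
              have hlogS' : Real.log S'.card + Real.log 2 ≤ Real.log X.card := by
                rw [← Real.log_mul (Nat.cast_ne_zero.mpr (by omega : S'.card ≠ 0)) (by norm_num)]
                apply Real.log_le_log (mul_pos (Nat.cast_pos.mpr (by omega : 0 < S'.card)) (by norm_num : (0:ℝ) < 2))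
                exact_mod_cast (show S'.card * 2 ≤ X.card by omega)
              have hlogS : Real.log S.card ≤ Real.log X.card := by
                apply Real.log_le_log (Nat.cast_pos.mpr (by omega : 0 < S.card))
                exact_mod_cast Nat.le_of_lt hSlt
              calc K * edVol w S * Real.log S.card + K * edVol w S' * Real.log S'.card
                  + 2 * (φ * min (edVol w S) (edVol w S'))
                  ≤ K * edVol w S * Real.log S.card + K * edVol w S' * Real.log S'.card
                    + K * Real.log 2 * edVol w S' := by
                    nlinarith [mul_le_mul_of_nonneg_left hminv (le_of_lt hφ)]
                _ = K * edVol w S' * (Real.log S'.card + Real.log 2)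
                    + K * edVol w S * Real.log S.card := by ring
                _ ≤ K * edVol w S' * Real.log X.card + K * edVol w S * Real.log X.card := by
                    have h1 : 0 ≤ K * edVol w S' := by positivity
                    have h2 : 0 ≤ K * edVol w S := by positivity
                    have := mul_le_mul_of_nonneg_left hlogS' h1
                    have := mul_le_mul_of_nonneg_left hlogS h2
                    nlinarith
                _ = K * edVol w X * Real.log X.card := by rw [hvolX]; ring
          have hcut2 : edCut w S S' ≤ φ * min (edVol w S) (edVol w S') := hcutmin
          linarith [hP₁cut, hP₂cut]
  -- apply with X = univ
  obtain ⟨P, hPne, hPdisj, hPsup, hPexp, hPcut⟩ := key (Finset.univ.card) Finset.univ le_rfl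
  refine ⟨⟨P, (Finset.supIndep_iff_pairwiseDisjoint).mpr hPdisj, hPsup, ?_⟩, ?_, ?_⟩
  · intro hbot
    exact absurd rfl (Finset.nonempty_iff_ne_empty.mp (hPne ⊥ hbot))
  · -- cut bound
    have hcast : ((∑ X ∈ P, ∑ u ∈ X, ∑ v ∈ Xᶜ, w u v : ℕ) : ℝ)
        = ∑ Y ∈ P, edCut w Y (Finset.univ \ Y) := by
      push_cast
      apply Finset.sum_congr rfl
      intro Y _
      rw [edCut, Finset.compl_eq_univ_sdiff]
    rw [hcast]
    have hvolu : edVol w Finset.univ = 2 * m := by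
      have h := congrArg (fun k : ℕ => (k : ℝ)) hm
      push_cast at h
      simpa [edVol] using h.symm
    have hcard : (Finset.univ : Finset (Fin n)).card = n := by simp
    calc ∑ Y ∈ P, edCut w Y (Finset.univ \ Y)
        ≤ (2 * φ / Real.log 2) * edVol w Finset.univ * Real.log (Finset.univ : Finset (Fin n)).card := hPcut
      _ = 4 / Real.log 2 * φ * m * Real.log n := by
          rw [hvolu, hcard]; ring
  · exact hPexp
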